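/- Suppose the finite-horizon value functions J_N : X → ℝ≥0 satisfy J_N(x) ≤ γ·ℓ_min(x) for all x ∈ X and all horizons N ≥ 1, where γ ≥ 1, and the principle of optimality holds in the form J_N(x) = ℓ(x, u₀*) + J_{N-1}(f(x, u₀*)) along optimal trajectories, with ℓ(x,u) ≥ ℓ_min(x) for all u. Then along an optimal open-loop trajectory x_k (k = 0,...,N) for horizon N starting at x, the tail costs decay exponentially: J_{N-k}(x_k) ≤ ((γ-1)/γ)^k · J_N(x) for all k ∈ {0,...,N-1}. -/
import Mathlib


/-- Cost controllability + principle of optimality ⇒ exponential decay of tail costs. -/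
theorem stmt2 {X U : Type*}
    (J : ℕ → X → ℝ) (ℓ : X → U → ℝ) (lmin : X → ℝ) (γ : ℝ)
    (N : ℕ) (x : ℕ → X) (u : ℕ → U)
    (hγ : 1 ≤ γ)
    (hJnn : ∀ M y, 0 ≤ J M y)
    (hcc : ∀ (M : ℕ) (y : X), 1 ≤ M → J M y ≤ γ * lmin y)
    (hlmin : ∀ (y : X) (u' : U), lmin y ≤ ℓ y u')
    (hbellman : ∀ k, k < N → J (N - k) (x k) = ℓ (x k) (u k) + J (N - k - 1) (x (k+1))) :
    ∀ k, k < N → J (N - k) (x k) ≤ ((γ - 1)/γ)^k * J N (x 0) := by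
  have hγ0 : 0 < γ := lt_of_lt_of_le one_pos hγ
  intro k
  induction k with
  | zero => intro _; simp
  | succ k ih =>
    intro hk1
    have hk : k < N := Nat.lt_of_succ_lt hk1
    have hM : 1 ≤ N - k := by omega
    have hcc' : J (N - k) (x k) ≤ γ * lmin (x k) := hcc _ _ hM
    have hb := hbellman k hk
    have hstep : J (N - (k+1)) (x (k+1)) ≤ (γ - 1)/γ * J (N - k) (x k) := by
      have h1 : lmin (x k) ≤ ℓ (x k) (u k) := hlmin _ _
      have hNk : N - (k+1) = N - k - 1 := by omega
      rw [hNk]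
      have heq : J (N - k - 1) (x (k+1)) = J (N - k) (x k) - ℓ (x k) (u k) := by linarith
      rw [heq, div_mul_eq_mul_div, le_div_iff₀ hγ0, sub_mul, sub_mul, one_mul]
      nlinarith
    calc J (N - (k+1)) (x (k+1)) ≤ (γ - 1)/γ * J (N - k) (x k) := hstep
      _ ≤ (γ - 1)/γ * (((γ - 1)/γ)^k * J N (x 0)) := by
          apply mul_le_mul_of_nonneg_left (ih hk)
          apply div_nonneg (by linarith) (le_of_lt hγ0)
      _ = ((γ - 1)/γ)^(k+1) * J N (x 0) := by ring
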